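/- arXiv:1003.4206 — 3 statements merged into one kernel-verified Lean document; each statement's English description precedes it below -/
import Mathlib

section
/- Let H be a real Hilbert space, D a linear subspace of H, and L : D → H a linear map. Let N ⊆ H denote the kernel of L regarded as a subspace of H; assume N is finite-dimensional of dimension m, that the range of L equals the orthogonal complement N^⊥ of N in H, and that u ∈ H satisfies u ∉ N^⊥. Then the set {L v − ν·u : v ∈ D, ⟨u, v⟩ = 0, ν ∈ ℝ} equals the linear subspace N^⊥ + ℝ·u of H; this subspace is closed in H, and the quotient H/(N^⊥ + ℝ·u) has dimension m − 1. -/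
open RealInnerProductSpace

/-- Image computation from Lemma 2.4: if `L` is a linear operator on a real Hilbert
space whose kernel `N` (viewed in `H`) has dimension `m` and whose range is `Nᗮ`, and `u ∉ Nᗮ`,
then `{L v - ν • u : v ∈ D, ⟪u, v⟫ = 0, ν ∈ ℝ}` equals the subspace `Nᗮ + ℝ • u`, which is
closed and of codimension `m - 1` in `H`. -/
theorem image_of_shifted_operator
    (H : Type*) [NormedAddCommGroup H] [InnerProductSpace ℝ H] [CompleteSpace H]
    (D : Submodule ℝ H) (L : D →ₗ[ℝ] H)
    (N : Submodule ℝ H) (hN : N = (LinearMap.ker L).map D.subtype)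
    (m : ℕ) [FiniteDimensional ℝ N] (hm : Module.finrank ℝ N = m)
    (hrange : LinearMap.range L = Nᗮ)
    (u : H) (hu : u ∉ Nᗮ) :
    {x : H | ∃ v : D, ∃ ν : ℝ, ⟪u, (v : H)⟫ = 0 ∧ x = L v - ν • u}
        = ((Nᗮ ⊔ ℝ ∙ u : Submodule ℝ H) : Set H) ∧
      IsClosed ((Nᗮ ⊔ ℝ ∙ u : Submodule ℝ H) : Set H) ∧
      FiniteDimensional ℝ (H ⧸ (Nᗮ ⊔ ℝ ∙ u : Submodule ℝ H)) ∧
      Module.finrank ℝ (H ⧸ (Nᗮ ⊔ ℝ ∙ u : Submodule ℝ H)) = m - 1 := by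
  set K : Submodule ℝ H := Nᗮ ⊔ ℝ ∙ u with hK
  -- an element of N not orthogonal to u
  obtain ⟨y, hyN, hyu⟩ : ∃ y ∈ N, ⟪y, u⟫ ≠ 0 := by
    by_contra h
    push_neg at h
    exact hu ((Submodule.mem_orthogonal N u).2 h)
  have huy : ⟪u, y⟫ ≠ 0 := by rwa [real_inner_comm]
  -- Part 1: the set equality
  have hset : {x : H | ∃ v : D, ∃ ν : ℝ, ⟪u, (v : H)⟫ = 0 ∧ x = L v - ν • u}
      = (K : Set H) := by
    ext x
    constructor
    · rintro ⟨v, ν, hv, rfl⟩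
      have h1 : (L v : H) ∈ Nᗮ := hrange ▸ LinearMap.mem_range_self L v
      exact sub_mem (Submodule.mem_sup_left h1)
        (Submodule.smul_mem _ ν
          (Submodule.mem_sup_right (Submodule.mem_span_singleton_self u)))
    · intro hx
      obtain ⟨w, hw, s, hs, rfl⟩ := Submodule.mem_sup.mp hx
      obtain ⟨c, rfl⟩ := Submodule.mem_span_singleton.mp hs
      rw [← hrange] at hw
      obtain ⟨v0, hv0⟩ := hw
      have hyN' := hyN
      rw [hN] at hyN'
      obtain ⟨k, hk, hky⟩ := Submodule.mem_map.mp hyN'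
      have hkH : (k : H) = y := hky
      have hLk : L k = 0 := LinearMap.mem_ker.mp hk
      refine ⟨v0 + (-⟪u, (v0 : H)⟫ / ⟪u, y⟫) • k, -c, ?_, ?_⟩
      · have : ((v0 + (-⟪u, (v0 : H)⟫ / ⟪u, y⟫) • k : D) : H)
            = (v0 : H) + (-⟪u, (v0 : H)⟫ / ⟪u, y⟫) • y := by
          push_cast [hkH]; ring_nf
        rw [this, inner_add_right, real_inner_smul_right]
        field_simp
        ring
      · rw [map_add, map_smul, hLk, smul_zero, add_zero, hv0, neg_smul, sub_neg_eq_add]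
  -- the orthogonal projection machinery
  haveI : CompleteSpace N := FiniteDimensional.complete ℝ N
  let P : H →L[ℝ] H :=
    ContinuousLinearMap.id ℝ H - Nᗮ.subtypeL.comp (Submodule.orthogonalProjectionOnto Nᗮ)
  have hP : ∀ x : H, P x = x - (Submodule.orthogonalProjectionOnto Nᗮ x : H) := fun x => rfl
  have hPmem : ∀ x : H, P x ∈ N := by
    intro x
    have := Submodule.sub_starProjection_mem_orthogonal (K := Nᗮ) x
    rwa [Submodule.orthogonal_orthogonal, Submodule.starProjection_apply, ← hP] at this
  have hPw : ∀ w ∈ Nᗮ, P w = 0 := by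
    intro w hw
    rw [hP, ← Submodule.starProjection_apply, Submodule.starProjection_eq_self_iff.2 hw, sub_self]
  have hclosed : IsClosed (K : Set H) := by
    have hKP : (K : Set H) = P ⁻¹' ((ℝ ∙ (P u) : Submodule ℝ H) : Set H) := by
      ext x
      simp only [Set.mem_preimage, SetLike.mem_coe]
      constructor
      · intro hx
        obtain ⟨w, hw, s, hs, rfl⟩ := Submodule.mem_sup.mp hx
        obtain ⟨c, rfl⟩ := Submodule.mem_span_singleton.mp hs
        rw [map_add, hPw w hw, map_smul, zero_add]
        exact Submodule.smul_mem _ c (Submodule.mem_span_singleton_self _)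
      · intro hx
        obtain ⟨c, hc⟩ := Submodule.mem_span_singleton.mp hx
        have h3 : x - (Submodule.orthogonalProjectionOnto Nᗮ x : H)
            = c • u - c • (Submodule.orthogonalProjectionOnto Nᗮ u : H) := by
          rw [← smul_sub, ← hP, ← hP, hc]
        have hxm : x - c • u = (Submodule.orthogonalProjectionOnto Nᗮ x : H)
            - c • (Submodule.orthogonalProjectionOnto Nᗮ u : H) := by
          calc x - c • u
              = ((Submodule.orthogonalProjectionOnto Nᗮ x : H) - c • (Submodule.orthogonalProjectionOnto Nᗮ u : H))
                + ((x - (Submodule.orthogonalProjectionOnto Nᗮ x : H))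
                  - (c • u - c • (Submodule.orthogonalProjectionOnto Nᗮ u : H))) := by abel
            _ = (Submodule.orthogonalProjectionOnto Nᗮ x : H) - c • (Submodule.orthogonalProjectionOnto Nᗮ u : H) := by
                rw [h3, sub_self, add_zero]
        have hx4 : x = (x - c • u) + c • u := by abel
        rw [hx4]
        refine Submodule.add_mem_sup ?_
          (Submodule.smul_mem _ c (Submodule.mem_span_singleton_self u))
        rw [hxm]
        exact sub_mem (Submodule.orthogonalProjectionOnto Nᗮ x).2
          (Submodule.smul_mem _ c (Submodule.orthogonalProjectionOnto Nᗮ u).2)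
    rw [hKP]
    exact (Submodule.closed_of_finiteDimensional _).preimage P.continuous
  -- the orthogonal complement of K
  have hKorth : Kᗮ = N ⊓ (ℝ ∙ u)ᗮ := by
    rw [hK, ← Submodule.inf_orthogonal, Submodule.orthogonal_orthogonal]
  -- the functional y ↦ ⟪u, y⟫ on N
  let f : N →ₗ[ℝ] ℝ :=
    { toFun := fun z => ⟪u, (z : H)⟫
      map_add' := fun a b => by simp [inner_add_right]
      map_smul' := fun c a => by simp [real_inner_smul_right] }
  have hKf : Kᗮ = (LinearMap.ker f).map N.subtype := by
    rw [hKorth]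
    ext x
    simp only [Submodule.mem_inf, Submodule.mem_map, LinearMap.mem_ker,
      Submodule.mem_orthogonal_singleton_iff_inner_right]
    constructor
    · rintro ⟨hxN, hxu⟩
      exact ⟨⟨x, hxN⟩, hxu, rfl⟩
    · rintro ⟨⟨z, hz⟩, hfz, rfl⟩
      exact ⟨hz, hfz⟩
  have hfrange : LinearMap.range f = ⊤ := by
    rw [LinearMap.range_eq_top]
    intro r
    exact ⟨(r / ⟪u, y⟫) • ⟨y, hyN⟩, by
      show ⟪u, ((r / ⟪u, y⟫) • (⟨y, hyN⟩ : N) : H)⟫ = r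
      push_cast
      rw [real_inner_smul_right]
      field_simp⟩
  have hker : Module.finrank ℝ (LinearMap.ker f) = m - 1 := by
    have h1 := LinearMap.finrank_range_add_finrank_ker f
    rw [hfrange, finrank_top, Module.finrank_self, hm] at h1
    omega
  have hm1 : 1 ≤ m := by
    have h1 := LinearMap.finrank_range_add_finrank_ker f
    rw [hfrange, finrank_top, Module.finrank_self, hm] at h1
    omega
  have hfinKorth : Module.finrank ℝ Kᗮ = m - 1 := by
    rw [hKf, Submodule.finrank_map_subtype_eq, hker]
  haveI : FiniteDimensional ℝ Kᗮ := by
    rw [hKf]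
    infer_instance
  -- the quotient
  haveI : CompleteSpace K := hclosed.completeSpace_coe
  have hcompl : IsCompl K Kᗮ := Submodule.isCompl_orthogonal_of_hasOrthogonalProjection
  let e : (H ⧸ K) ≃ₗ[ℝ] Kᗮ := Submodule.quotientEquivOfIsCompl K Kᗮ hcompl
  haveI : FiniteDimensional ℝ (H ⧸ K) := Module.Finite.equiv e.symm
  exact ⟨hset, hclosed, inferInstance, by rw [e.finrank_eq, hfinKorth]⟩
end

section
/- Let g be a positive definite symmetric 3×3 real matrix, u ∈ ℝ³, λ ∈ ℝ, and define the antisymmetric 3×3 matrix ω by ω_{lm} := λ·√(det g)·Σ_{s} ε(l,m,s)·(g⁻¹u)_s (the coordinate form of the eigenvalue equation *_g du = λu). Then for every symmetric 3×3 real matrix h and every index k, the function t ↦ B(g + t·h, ω)_k, which is defined for all t in a neighborhood of 0 where g + t·h is positive definite, has derivative at t = 0 equal to λ·(h·(g⁻¹u))_k − (λ/2)·tr(g⁻¹h)·u_k. (This is the pointwise coordinate form of Lemma 2.1: if u is an eigenform of the Beltrami operator *_g d with eigenvalue λ, then D(*d)_g(h)u = λ h(u^♯, ·) − (λ/2)(tr_g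 h)·u.) -/
/-- The Levi-Civita symbol on three indices, as a real number. -/
noncomputable def leviCivita (i j k : Fin 3) : ℝ :=
  (((j : ℕ) : ℝ) - ((i : ℕ) : ℝ)) * ((((k : ℕ) : ℝ)) - ((i : ℕ) : ℝ))
    * ((((k : ℕ) : ℝ)) - ((j : ℕ) : ℝ)) / 2

/-- The coordinate expression at a point of the Beltrami operator `*_a d` applied to a
1-form with exterior derivative `ω`: `B(a,ω)_k = (1/2)·√(det a)·∑ ε(i,j,k) a⁻¹_{il} a⁻¹_{jm} ω_{lm}`. -/
noncomputable def beltramiCoord (a ω : Matrix (Fin 3) (Fin 3) ℝ) (k : Fin 3) : ℝ :=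
  (1 / 2) * Real.sqrt a.det *
    ∑ i, ∑ j, ∑ l, ∑ m, leviCivita i j k * a⁻¹ i l * a⁻¹ j m * ω l m

set_option maxHeartbeats 1000000

lemma fin3cases (k : Fin 3) : k = 0 ∨ k = 1 ∨ k = 2 := by revert k; decide

lemma core (a : Matrix (Fin 3) (Fin 3) ℝ) (k s : Fin 3) :
    ∑ i, ∑ j, ∑ l, ∑ m,
      leviCivita i j k * a.adjugate i l * a.adjugate j m * leviCivita l m s
      = 2 * a.det * a s k := by
  rcases fin3cases k with rfl|rfl|rfl <;> rcases fin3cases s with rfl|rfl|rfl <;>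
  · simp only [Fin.sum_univ_three]
    norm_num [leviCivita, Matrix.adjugate_fin_three, Matrix.det_fin_three, Matrix.cons_val_two, Matrix.cons_val_succ', Matrix.tail_cons, Matrix.head_cons]
    ring

lemma belt_eval (a : Matrix (Fin 3) (Fin 3) ℝ) (ha : 0 < a.det)
    (c : ℝ) (v : Fin 3 → ℝ) (ω : Matrix (Fin 3) (Fin 3) ℝ)
    (hω : ∀ l m, ω l m = c * ∑ s, leviCivita l m s * v s) (k : Fin 3) :
    beltramiCoord a ω k = c * (Real.sqrt a.det)⁻¹ * ∑ s, a s k * v s := by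
  have hd : a.det ≠ 0 := ne_of_gt ha
  have hS : Real.sqrt a.det * Real.sqrt a.det = a.det := Real.mul_self_sqrt ha.le
  have hS0 : Real.sqrt a.det ≠ 0 := by positivity
  have hinv : ∀ i l, a⁻¹ i l = a.det⁻¹ * a.adjugate i l := by
    intro i l
    rw [Matrix.inv_def, Matrix.smul_apply, smul_eq_mul, Ring.inverse_eq_inv]
  have step : (∑ i, ∑ j, ∑ l, ∑ m, leviCivita i j k * a⁻¹ i l * a⁻¹ j m * ω l m)
      = c * a.det⁻¹ * a.det⁻¹ *
        ∑ s, (∑ i, ∑ j, ∑ l, ∑ m,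
          leviCivita i j k * a.adjugate i l * a.adjugate j m * leviCivita l m s) * v s := by
    simp only [hω, hinv, Fin.sum_univ_three]
    ring
  rw [beltramiCoord, step]
  simp only [core]
  have T : (∑ s, 2 * a.det * a s k * v s) = 2 * a.det * ∑ s, a s k * v s := by
    rw [Finset.mul_sum]
    exact Finset.sum_congr rfl fun s _ => mul_assoc _ _ _
  rw [T]
  set S := Real.sqrt a.det with hSdef
  rw [← hS]
  field_simp

lemma det_expand (g h : Matrix (Fin 3) (Fin 3) ℝ) (t : ℝ) :
    (g + t • h).det = g.det + t * (g.adjugate * h).trace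
      + t ^ 2 * (h.adjugate * g).trace + t ^ 3 * h.det := by
  simp only [Matrix.det_fin_three, Matrix.adjugate_fin_three, Matrix.trace_fin_three,
    Matrix.mul_apply, Fin.sum_univ_three, Matrix.add_apply, Matrix.smul_apply, smul_eq_mul,
    Matrix.cons_val', Matrix.cons_val_zero, Matrix.cons_val_one, Matrix.head_cons,
    Matrix.empty_val', Matrix.cons_val_fin_one, Matrix.head_fin_const, Matrix.cons_val_two,
    Matrix.tail_cons, Matrix.of_apply]
  ring

/-- Pointwise coordinate form of Lemma 2.1: if `u` is an eigenform of the Beltrami operator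
with eigenvalue `λ`, i.e. `ω_{lm} = λ √(det g) ∑_s ε(l,m,s) (g⁻¹u)_s`, then the variation of the
Beltrami operator in the direction of a symmetric matrix `h` is
`D(*d)_g(h)u = λ h(g⁻¹u) - (λ/2) tr(g⁻¹h) u`. -/
theorem deriv_beltramiCoord_eigenform
    (g : Matrix (Fin 3) (Fin 3) ℝ) (hg : g.PosDef) (hgsymm : g.IsSymm)
    (u : Fin 3 → ℝ) (lam : ℝ)
    (ω : Matrix (Fin 3) (Fin 3) ℝ)
    (hω : ∀ l m, ω l m = lam * Real.sqrt g.det * ∑ s, leviCivita l m s * g⁻¹.mulVec u s)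
    (h : Matrix (Fin 3) (Fin 3) ℝ) (hsymm : h.IsSymm) (k : Fin 3) :
    HasDerivAt (fun t : ℝ => beltramiCoord (g + t • h) ω k)
      (lam * h.mulVec (g⁻¹.mulVec u) k - (lam / 2) * (g⁻¹ * h).trace * u k) 0 := by
  have hDpos : 0 < g.det := hg.det_pos
  have hDne : g.det ≠ 0 := ne_of_gt hDpos
  have hS : Real.sqrt g.det * Real.sqrt g.det = g.det := Real.mul_self_sqrt hDpos.le
  have hS0 : Real.sqrt g.det ≠ 0 := by positivity
  have h0 : g + (0:ℝ) • h = g := by simp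
  have hd0 : (g + (0:ℝ) • h).det = g.det := by rw [h0]
  set v : Fin 3 → ℝ := g⁻¹.mulVec u with hv
  -- continuity and eventual positivity of the determinant
  have hcont : Continuous fun t : ℝ => (g + t • h).det :=
    (continuous_const.add (continuous_id.smul continuous_const)).matrix_det
  have hev : ∀ᶠ t in nhds (0:ℝ), 0 < (g + t • h).det := by
    have h0' : 0 < (g + (0:ℝ) • h).det := by rw [hd0]; exact hDpos
    exact hcont.continuousAt.eventually (eventually_gt_nhds h0')
  -- eventual equality with the closed form
  have heq : (fun t : ℝ => beltramiCoord (g + t • h) ω k) =ᶠ[nhds (0:ℝ)]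
      fun t : ℝ => lam * Real.sqrt g.det *
        ((Real.sqrt ((g + t • h).det))⁻¹ * ∑ s, (g + t • h) s k * v s) := by
    filter_upwards [hev] with t ht
    rw [belt_eval (g + t • h) ht (lam * Real.sqrt g.det) v ω hω k, mul_assoc]
  -- derivative of the determinant
  have hdet : HasDerivAt (fun t : ℝ => (g + t • h).det) ((g.adjugate * h).trace) 0 := by
    have hpoly : HasDerivAt (fun t : ℝ => g.det + t * (g.adjugate * h).trace
        + t ^ 2 * (h.adjugate * g).trace + t ^ 3 * h.det) ((g.adjugate * h).trace) 0 := by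
      have := (((hasDerivAt_const (0:ℝ) g.det).add
          ((hasDerivAt_id (0:ℝ)).mul_const ((g.adjugate * h).trace))).add
          ((hasDerivAt_pow 2 (0:ℝ)).mul_const ((h.adjugate * g).trace))).add
          ((hasDerivAt_pow 3 (0:ℝ)).mul_const h.det)
      exact this.congr_deriv (by norm_num)
    exact hpoly.congr_of_eventuallyEq (Filter.Eventually.of_forall fun t => det_expand g h t)
  -- derivative of the linear part
  have hm : HasDerivAt (fun t : ℝ => ∑ s, (g + t • h) s k * v s) (∑ s, h s k * v s) 0 := by
    have hlin : HasDerivAt (fun t : ℝ => (∑ s, g s k * v s) + t * ∑ s, h s k * v s)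
        (∑ s, h s k * v s) 0 := by
      have := (hasDerivAt_const (0:ℝ) (∑ s, g s k * v s)).add
        ((hasDerivAt_id (0:ℝ)).mul_const (∑ s, h s k * v s))
      exact this.congr_deriv (by ring)
    refine hlin.congr_of_eventuallyEq (Filter.Eventually.of_forall fun t => ?_)
    simp only [Matrix.add_apply, Matrix.smul_apply, smul_eq_mul, add_mul,
      Finset.sum_add_distrib, Finset.mul_sum, mul_assoc]
  -- assemble the derivative of the closed form
  have hsq : HasDerivAt (fun t : ℝ => Real.sqrt ((g + t • h).det))
      ((g.adjugate * h).trace / (2 * Real.sqrt ((g + (0:ℝ) • h).det))) 0 :=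
    hdet.sqrt (by rw [hd0]; exact hDne)
  have hinv : HasDerivAt (fun t : ℝ => (Real.sqrt ((g + t • h).det))⁻¹)
      (-((g.adjugate * h).trace / (2 * Real.sqrt ((g + (0:ℝ) • h).det)))
        / (Real.sqrt ((g + (0:ℝ) • h).det)) ^ 2) 0 :=
    hsq.inv (by rw [hd0]; exact hS0)
  have hF := (hinv.mul hm).const_mul (lam * Real.sqrt g.det)
  have H := hF.congr_of_eventuallyEq heq
  refine H.congr_deriv (Eq.symm ?_)
  -- now prove the value equality
  have hm0 : (∑ s, (g + (0:ℝ) • h) s k * v s) = u k := by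
    rw [h0]
    have : (∑ s, g s k * v s) = g.mulVec v k := by
      rw [Matrix.mulVec, dotProduct]
      exact Finset.sum_congr rfl fun s _ => by rw [hgsymm.apply]
    rw [this, hv, Matrix.mulVec_mulVec, Matrix.mul_nonsing_inv g (isUnit_iff_ne_zero.mpr hDne),
      Matrix.one_mulVec]
  have hB : (∑ s, h s k * v s) = h.mulVec v k := by
    rw [Matrix.mulVec, dotProduct]
    exact Finset.sum_congr rfl fun s _ => by rw [hsymm.apply]
  have htr : (g.adjugate * h).trace = g.det * (g⁻¹ * h).trace := by
    rw [Matrix.inv_def, Matrix.smul_mul, Matrix.trace_smul, Ring.inverse_eq_inv,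
      smul_eq_mul]
    field_simp
  rw [hm0, hB, hd0, htr]
  set S := Real.sqrt g.det with hSdef
  rw [show g.det = S * S from hS.symm] -- replace det by S*S outside sqrt
  field_simp
  ring
end

section
/- Let n ≥ 1 and r ≥ 1 be integers, let U ⊆ ℝⁿ be open, let w : U → ℝⁿ be of class C^r, let K ⊆ U be compact with w(x) ≠ 0 for every x ∈ K, and let v : U → ℝⁿ be of class C^r with support contained in K. Then there exists a map h : U → (n×n real matrices) of class C^r such that h(x) is a symmetric matrix for every x ∈ U and h(x)·w(x) = v(x) for every x ∈ U, where h(x)·w(x) denotes the matrix-vector product. -/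
/-- Euclidean coordinate form of Lemma 2.2: if `w` is a `C^r` vector field on an open set
`U ⊆ ℝⁿ`, `K ⊆ U` is compact and disjoint from the zero set of `w`, then every `C^r` field
`v` supported in `K` can be written as `v(x) = h(x)·w(x)` for a `C^r` field `h` of symmetric
matrices on `U`. -/
theorem exists_symm_matrix_field_mulVec_eq
    (n r : ℕ) (hn : 1 ≤ n) (hr : 1 ≤ r)
    (U : Set (Fin n → ℝ)) (hU : IsOpen U)
    (w : (Fin n → ℝ) → (Fin n → ℝ)) (hw : ContDiffOn ℝ r w U)
    (K : Set (Fin n → ℝ)) (hK : IsCompact K) (hKU : K ⊆ U)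
    (hwK : ∀ x ∈ K, w x ≠ 0)
    (v : (Fin n → ℝ) → (Fin n → ℝ)) (hv : ContDiffOn ℝ r v U)
    (hsupp : Function.support v ⊆ K) :
    ∃ h : (Fin n → ℝ) → (Fin n → Fin n → ℝ),
      ContDiffOn ℝ r h U ∧
      (∀ x ∈ U, (Matrix.of (h x)).IsSymm) ∧
      (∀ x ∈ U, (Matrix.of (h x)).mulVec (w x) = v x) := by
  set s : (Fin n → ℝ) → ℝ := fun y => ∑ k, w y k * w y k with hs_def
  set d : (Fin n → ℝ) → ℝ := fun y => ∑ k, v y k * w y k with hd_def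
  set h : (Fin n → ℝ) → (Fin n → Fin n → ℝ) := fun y i j =>
    (v y i * w y j + w y i * v y j) / s y - d y * w y i * w y j / (s y) ^ 2 with hh_def
  -- vanishing of v where w vanishes
  have hv0 : ∀ y, y ∉ K → v y = 0 := by
    intro y hy
    by_contra hvy
    exact hy (hsupp (by simpa [Function.mem_support] using hvy))
  have hV : IsOpen {y | y ∈ U ∧ w y ≠ 0} := by
    have : {y | y ∈ U ∧ w y ≠ 0} = U ∩ w ⁻¹' ({0}ᶜ) := Set.ext fun y => Iff.rfl
    rw [this]
    exact hw.continuousOn.isOpen_inter_preimage hU (isOpen_compl_singleton)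
  have hVsub : {y | y ∈ U ∧ w y ≠ 0} ⊆ U := fun y hy => hy.1
  have hs_pos : ∀ y, w y ≠ 0 → 0 < s y := by
    intro y hy
    obtain ⟨k, hk⟩ : ∃ k, w y k ≠ 0 := by
      by_contra hc; push_neg at hc; exact hy (funext hc)
    exact Finset.sum_pos' (fun k _ => mul_self_nonneg _)
      ⟨k, Finset.mem_univ k, mul_self_pos.mpr hk⟩
  -- C^r on the set where w ≠ 0
  have hwc : ∀ i, ContDiffOn ℝ r (fun y => w y i) {y | y ∈ U ∧ w y ≠ 0} :=
    fun i => ((ContinuousLinearMap.proj i : (Fin n → ℝ) →L[ℝ] ℝ).contDiff.comp_contDiffOn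
      (hw.mono hVsub))
  have hvc : ∀ i, ContDiffOn ℝ r (fun y => v y i) {y | y ∈ U ∧ w y ≠ 0} :=
    fun i => ((ContinuousLinearMap.proj i : (Fin n → ℝ) →L[ℝ] ℝ).contDiff.comp_contDiffOn
      (hv.mono hVsub))
  have hsc : ContDiffOn ℝ r s {y | y ∈ U ∧ w y ≠ 0} :=
    ContDiffOn.sum fun k _ => (hwc k).mul (hwc k)
  have hdc : ContDiffOn ℝ r d {y | y ∈ U ∧ w y ≠ 0} :=
    ContDiffOn.sum fun k _ => (hvc k).mul (hwc k)
  have hhV : ContDiffOn ℝ r h {y | y ∈ U ∧ w y ≠ 0} := by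
    rw [contDiffOn_pi]
    intro i
    rw [contDiffOn_pi]
    intro j
    refine ContDiffOn.sub ?_ ?_
    · exact (((hvc i).mul (hwc j)).add ((hwc i).mul (hvc j))).div hsc
        (fun y hy => (hs_pos y hy.2).ne')
    · exact ((hdc.mul (hwc i)).mul (hwc j)).div (hsc.pow 2)
        (fun y hy => pow_ne_zero 2 (hs_pos y hy.2).ne')
  refine ⟨h, ?_, ?_, ?_⟩
  · -- ContDiffOn ℝ r h U
    intro x hx
    by_cases hwx : w x = 0
    · -- x ∉ K, h = 0 near x
      have hxK : x ∉ K := fun hxK => hwK x hxK hwx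
      have hUK : IsOpen (U \ K) := hU.sdiff hK.isClosed
      have : ContDiffOn ℝ r h (U \ K) := by
        apply (contDiffOn_const (c := (0 : Fin n → Fin n → ℝ))).congr
        intro y hy
        have hvy : v y = 0 := hv0 y hy.2
        funext i j
        simp [hh_def, hd_def, hvy]
      exact (this.contDiffAt (hUK.mem_nhds ⟨hx, hxK⟩)).contDiffWithinAt
    · exact ((hhV.contDiffAt (hV.mem_nhds ⟨hx, hwx⟩)).contDiffWithinAt)
  · -- symmetry
    intro x hx
    rw [Matrix.IsSymm]
    ext i j
    simp [hh_def, Matrix.transpose_apply]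
    ring
  · -- mulVec
    intro x hx
    by_cases hwx : w x = 0
    · have hxK : x ∉ K := fun hxK => hwK x hxK hwx
      have hvx : v x = 0 := hv0 x hxK
      simp [hwx, hvx, Matrix.mulVec_zero]
    · have hs0 : s x ≠ 0 := (hs_pos x hwx).ne'
      funext i
      have expand : ∀ j, h x i j * w x j =
          v x i * (w x j * w x j) * (s x)⁻¹ + (v x j * w x j) * (w x i * (s x)⁻¹)
            - (w x j * w x j) * (d x * w x i * ((s x) ^ 2)⁻¹) := by
        intro j
        simp only [hh_def]
        field_simp
      calc (Matrix.of (h x)).mulVec (w x) i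
          = ∑ j, h x i j * w x j := by
            simp [Matrix.mulVec, dotProduct]
        _ = ∑ j, (v x i * (w x j * w x j) * (s x)⁻¹ + (v x j * w x j) * (w x i * (s x)⁻¹)
              - (w x j * w x j) * (d x * w x i * ((s x) ^ 2)⁻¹)) := by
            exact Finset.sum_congr rfl fun j _ => expand j
        _ = v x i * s x * (s x)⁻¹ + d x * (w x i * (s x)⁻¹)
              - s x * (d x * w x i * ((s x) ^ 2)⁻¹) := by
            rw [Finset.sum_sub_distrib, Finset.sum_add_distrib,
              ← Finset.sum_mul, ← Finset.sum_mul, ← Finset.sum_mul]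
            simp [hs_def, hd_def, Finset.mul_sum, mul_comm, mul_assoc]
        _ = v x i := by field_simp; ring
end
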